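/- Let A be the localized path algebra of the doubled A_2 quiver, P = ½((1+ee*)(∂/∂e*)(∂/∂e) - (1+e*e)(∂/∂e)(∂/∂e*)) the double quasi-Poisson bivector, and ω₁ ≡ ½(Φ de* de - Φ^{-1} de de*) the quasi-bisymplectic form. Then evaluated on de one has the compatibility 4·ι(ω₁)ι(P)(de) = 2de + Φ^{-1}·de·Φ^{-1} + Φ·de·Φ = 4de - [e, Φ^{-1}dΦ - dΦ·Φ^{-1}], i.e., ι(ω₁)ι(P) = 1 - ¼T on de, where T(dp) = [p, Φ^{-1}dΦ - dΦΦ^{-1}]. -/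
import Mathlib


open scoped TensorProduct

section

variable {k : Type*} [Field k] {A : Type*} [Ring A] [Algebra k A]
  {Ω : Type*} [Ring Ω] [Algebra k Ω]

/-- Sweedler-type evaluation: for `t = ∑ x ⊗ y` this returns `∑ ι(y) * w * ι(x)`. -/
noncomputable def sweedler (ι : A →ₐ[k] Ω) (w : Ω) : A ⊗[k] A →ₗ[k] Ω :=
  TensorProduct.lift
    (LinearMap.mk₂ k (fun x y => ι y * w * ι x)
      (fun _ _ _ => by simp [map_add, mul_add])
      (fun _ _ _ => by simp [map_smul, mul_smul_comm])
      (fun _ _ _ => by simp [map_add, add_mul])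
      (fun _ _ _ => by simp [map_smul, smul_mul_assoc]))

/-- `(a δ b)(c) = δ(c)' b ⊗ a δ(c)''`: the inner bimodule action on double derivations. -/
noncomputable def innerTwist (a b : A) (δ : A →ₗ[k] A ⊗[k] A) : A →ₗ[k] A ⊗[k] A :=
  (TensorProduct.map (LinearMap.mulRight k b) (LinearMap.mulLeft k a)) ∘ₗ δ

end


lemma corner_left' {A : Type*} [Ring A] {e f x : A} (he : e * e = e) (hx : e * x * f = x) :
    e * x = x := by
  conv_lhs => rw [← hx]
  rw [← mul_assoc, ← mul_assoc, he, hx]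

lemma corner_right' {A : Type*} [Ring A] {f x : A} (hf : f * f = f) {e : A}
    (hx : e * x * f = x) : x * f = x := by
  conv_lhs => rw [← hx]
  rw [mul_assoc, hf, hx]

lemma sand_zero_left' {A : Type*} [Ring A] {e f x g : A} (hx : e * x * f = x) (hge : g * e = 0) :
    g * x = 0 := by
  rw [← hx, ← mul_assoc, ← mul_assoc, hge, zero_mul, zero_mul]

lemma sand_zero_right' {A : Type*} [Ring A] {e f x g : A} (hx : e * x * f = x) (hfg : f * g = 0) :
    x * g = 0 := by
  rw [← hx, mul_assoc, hfg, mul_zero]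

/-- Let `A` be the localized path algebra of the doubled `A₂` quiver,
`P = ½((1+ee^*)(∂/∂e^*)(∂/∂e) - (1+e^*e)(∂/∂e)(∂/∂e^*))` the double quasi-Poisson bivector,
and `ω₁ = ½(Φ de^* de - Φ⁻¹ de de^*)` the quasi-bisymplectic form.  Then, evaluated on `de`,
one has the compatibility
`4·ι(ω₁)ι(P)(de) = 2de + Φ⁻¹·de·Φ⁻¹ + Φ·de·Φ = 4de - [e, Φ⁻¹dΦ - dΦ·Φ⁻¹]`,
i.e. `ι(ω₁)ι(P) = 1 - ¼T` on `de`, where `T(dp) = [p, Φ⁻¹dΦ - dΦΦ⁻¹]`.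

Here `ι(P)(de) = ½((∂/∂e^*)(1+e^*e) + (1+ee^*)(∂/∂e^*))` (a double derivation), and the
noncommutative forms are axiomatised by an embedding `ι : A → Ω`, a differential `D`
vanishing on `R`, and a contraction operator `ctr` with
`ι_δ(p dq dr) = δ(q)''·dr·p·δ(q)' − δ(r)''·p·dq·δ(r)'` on generating `2`-forms. -/
theorem double_quasi_poisson_compatibility_A2
    {k : Type*} [Field k] [CharZero k] {A : Type*} [Ring A] [Algebra k A]
    {Ω : Type*} [Ring Ω] [Algebra k Ω]
    -- the localized path algebra of the doubled `A₂` quiver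
    (e1 e2 E Es b1 b2 : A)
    (h1 : e1 * e1 = e1) (h2 : e2 * e2 = e2)
    (h12 : e1 * e2 = 0) (h21 : e2 * e1 = 0) (hsum : e1 + e2 = 1)
    (hE : e2 * E * e1 = E) (hEs : e1 * Es * e2 = Es)
    (hb1 : e1 * b1 * e1 = b1)
    (hb1l : (e1 + Es * E) * b1 = e1) (hb1r : b1 * (e1 + Es * E) = e1)
    (hb2 : e2 * b2 * e2 = b2)
    (hb2l : (e2 + E * Es) * b2 = e2) (hb2r : b2 * (e2 + E * Es) = e2)
    -- the noncommutative differential forms relative to `R`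
    (ι : A →ₐ[k] Ω) (D : Ω →ₗ[k] Ω)
    (hLeib : ∀ u v : A, D (ι (u * v)) = ι u * D (ι v) + D (ι u) * ι v)
    (hDe1 : D (ι e1) = 0) (hDe2 : D (ι e2) = 0)
    -- the contraction operator, linear in the double derivation
    (ctr : (A →ₗ[k] A ⊗[k] A) → Ω →ₗ[k] Ω)
    (hctrAdd : ∀ (δ δ' : A →ₗ[k] A ⊗[k] A) (ω : Ω), ctr (δ + δ') ω = ctr δ ω + ctr δ' ω)
    (hctrSmul : ∀ (c : k) (δ : A →ₗ[k] A ⊗[k] A) (ω : Ω), ctr (c • δ) ω = c • ctr δ ω)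
    (hctr : ∀ (δ : A →ₗ[k] A ⊗[k] A) (p q r : A),
      ctr δ (ι p * D (ι q) * D (ι r)) =
        sweedler ι (D (ι r) * ι p) (δ q) - sweedler ι (ι p * D (ι q)) (δ r))
    -- the partial double derivations `∂/∂e` and `∂/∂e*`
    (δe δes : A →ₗ[k] A ⊗[k] A)
    (hδeder : ∀ u v : A,
      δe (u * v) = TensorProduct.map (LinearMap.mulLeft k u) LinearMap.id (δe v) +
        TensorProduct.map LinearMap.id (LinearMap.mulRight k v) (δe u))
    (hδesder : ∀ u v : A,
      δes (u * v) = TensorProduct.map (LinearMap.mulLeft k u) LinearMap.id (δes v) +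
        TensorProduct.map LinearMap.id (LinearMap.mulRight k v) (δes u))
    (hδeE : δe E = e2 ⊗ₜ[k] e1) (hδeEs : δe Es = 0)
    (hδee1 : δe e1 = 0) (hδee2 : δe e2 = 0)
    (hδesEs : δes Es = e1 ⊗ₜ[k] e2) (hδesE : δes E = 0)
    (hδese1 : δes e1 = 0) (hδese2 : δes e2 = 0) :
    -- `Φ = a₁⁻¹ + a₂`, `Φ⁻¹ = a₁ + a₂⁻¹`
    ((4 : k) • ctr
        ((2 : k)⁻¹ • (innerTwist 1 (1 + Es * E) δes + innerTwist (1 + E * Es) 1 δes))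
        ((2 : k)⁻¹ • (ι (b1 + (e2 + E * Es)) * D (ι Es) * D (ι E) -
          ι ((e1 + Es * E) + b2) * D (ι E) * D (ι Es))) =
      (2 : k) • D (ι E) + ι ((e1 + Es * E) + b2) * D (ι E) * ι ((e1 + Es * E) + b2) +
        ι (b1 + (e2 + E * Es)) * D (ι E) * ι (b1 + (e2 + E * Es))) ∧
    ((2 : k) • D (ι E) + ι ((e1 + Es * E) + b2) * D (ι E) * ι ((e1 + Es * E) + b2) +
        ι (b1 + (e2 + E * Es)) * D (ι E) * ι (b1 + (e2 + E * Es)) =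
      (4 : k) • D (ι E) -
        (ι E * (ι ((e1 + Es * E) + b2) * D (ι (b1 + (e2 + E * Es))) -
            D (ι (b1 + (e2 + E * Es))) * ι ((e1 + Es * E) + b2)) -
          (ι ((e1 + Es * E) + b2) * D (ι (b1 + (e2 + E * Es))) -
            D (ι (b1 + (e2 + E * Es))) * ι ((e1 + Es * E) + b2)) * ι E)) := by
  -- ### A-level identities in the path algebra
  have he1Es : e1 * Es = Es := corner_left' h1 hEs
  have hEse2 : Es * e2 = Es := corner_right' h2 hEs
  have he2E : e2 * E = E := corner_left' h2 hE
  have hEe1 : E * e1 = E := corner_right' h1 hE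
  have he2Es : e2 * Es = 0 := sand_zero_left' hEs h21
  have hEse1 : Es * e1 = 0 := sand_zero_right' hEs h21
  have he1E : e1 * E = 0 := sand_zero_left' hE h12
  have hEe2 : E * e2 = 0 := sand_zero_right' hE h12
  have hEE : E * E = 0 := sand_zero_left' hE hEe2
  have hEsEs : Es * Es = 0 := sand_zero_left' hEs hEse1
  have he1b1 : e1 * b1 = b1 := corner_left' h1 hb1
  have hb1e1 : b1 * e1 = b1 := corner_right' h1 hb1
  have hb1e2 : b1 * e2 = 0 := sand_zero_right' hb1 h12
  have he2b2 : e2 * b2 = b2 := corner_left' h2 hb2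
  have hb2e2 : b2 * e2 = b2 := corner_right' h2 hb2
  have he1b2 : e1 * b2 = 0 := sand_zero_left' hb2 h12
  have hb2e1 : b2 * e1 = 0 := sand_zero_right' hb2 h21
  have hEb2 : E * b2 = 0 := sand_zero_left' hb2 hEe2
  have hb1E : b1 * E = 0 := sand_zero_left' hE hb1e2
  have hb2Es : b2 * Es = 0 := sand_zero_left' hEs hb2e1
  have hb1EsE : b1 * Es * E = e1 - b1 := by
    have h := hb1r
    rw [mul_add, hb1e1] at h
    rw [mul_assoc]
    exact eq_sub_of_add_eq' h
  have hEsEb1 : Es * E * b1 = e1 - b1 := by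
    have h := hb1l
    rw [add_mul, he1b1] at h
    exact eq_sub_of_add_eq' h
  have hb2EEs : b2 * E * Es = e2 - b2 := by
    have h := hb2r
    rw [mul_add, hb2e2] at h
    rw [mul_assoc]
    exact eq_sub_of_add_eq' h
  have hEEsb2 : E * Es * b2 = e2 - b2 := by
    have h := hb2l
    rw [add_mul, he2b2] at h
    exact eq_sub_of_add_eq' h
  have hEb1 : E * b1 = b2 * E := by
    have key : b2 * E = E * b1 := by
      calc b2 * E = b2 * E * ((e1 + Es * E) * b1) := by rw [hb1l, mul_assoc, hEe1]
        _ = b2 * E * b1 + b2 * E * Es * (E * b1) := by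
            rw [add_mul, he1b1, mul_add]; noncomm_ring
        _ = b2 * E * b1 + (e2 - b2) * (E * b1) := by rw [hb2EEs]
        _ = E * b1 := by
            rw [sub_mul, ← mul_assoc e2 E b1, he2E]; noncomm_ring
    exact key.symm
  have hEb1Es : E * b1 * Es = e2 - b2 := by rw [hEb1, hb2EEs]
  have hEsb2E : Es * b2 * E = e1 - b1 := by rw [mul_assoc, ← hEb1, ← mul_assoc, hEsEb1]
  -- composite left-associated helpers
  have hEEse1 : E * Es * e1 = 0 := by rw [mul_assoc, hEse1, mul_zero]
  have hEEse2 : E * Es * e2 = E * Es := by rw [mul_assoc, hEse2]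
  have hEEsEs : E * Es * Es = 0 := by rw [mul_assoc, hEsEs, mul_zero]
  have hEsEE : Es * E * E = 0 := by rw [mul_assoc, hEE, mul_zero]
  have hEsEe2 : Es * E * e2 = 0 := by rw [mul_assoc, hEe2, mul_zero]
  -- products with Φ and Φ⁻¹
  have hp1sw : (b1 + (e2 + E * Es)) * (e1 + Es * E) = e1 := by
    simp only [add_mul, mul_add, ← mul_assoc, hb1e1, hb1EsE, h21, he2Es, hEEse1, hEEsEs,
      zero_mul, mul_zero, add_zero, zero_add]
    abel
  have hp1e1 : (b1 + (e2 + E * Es)) * e1 = b1 := by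
    simp only [add_mul, hb1e1, h21, hEEse1, add_zero]
  have he1p1 : e1 * (b1 + (e2 + E * Es)) = b1 := by
    simp only [mul_add, ← mul_assoc, he1b1, h12, he1E, zero_mul, add_zero]
  have hp1e2 : (b1 + (e2 + E * Es)) * e2 = e2 + E * Es := by
    simp only [add_mul, hb1e2, h2, hEEse2, zero_add]
  have hp2E : ((e1 + Es * E) + b2) * E = b2 * E := by
    simp only [add_mul, he1E, hEsEE, zero_add]
  have hp2e2 : ((e1 + Es * E) + b2) * e2 = b2 := by
    simp only [add_mul, h12, hEsEe2, hb2e2, zero_add, add_zero]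
  have he1p2 : e1 * ((e1 + Es * E) + b2) = e1 + Es * E := by
    simp only [mul_add, ← mul_assoc, h1, he1Es, he1b2, add_zero]
  have he2p2 : e2 * ((e1 + Es * E) + b2) = b2 := by
    simp only [mul_add, ← mul_assoc, h21, he2Es, he2b2, zero_mul, zero_add, add_zero]
  have hsw24 : (e2 + E * Es) * ((e1 + Es * E) + b2) = e2 := by
    simp only [add_mul, mul_add, ← mul_assoc, h21, he2Es, he2b2, hEEse1, hEEsEs, hEEsb2,
      zero_mul, mul_zero, zero_add, add_zero]
    abel
  have hEsp2 : Es * ((e1 + Es * E) + b2) = Es * b2 := by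
    simp only [mul_add, ← mul_assoc, hEse1, hEsEs, zero_mul, zero_add, add_zero]
  have hdA1 : e1 * (1 + Es * E) = e1 + Es * E := by
    rw [mul_add, mul_one, ← mul_assoc, he1Es]
  have hdA2 : (1 + E * Es) * e2 = e2 + E * Es := by
    rw [add_mul, one_mul, hEEse2]
  -- ### Ω-level identities
  have hu : D (ι E) = ι e2 * D (ι E) * ι e1 := by
    conv_lhs => rw [← hE]
    rw [hLeib (e2 * E) e1, hLeib e2 E, hDe1, hDe2, mul_zero, zero_mul, add_zero, zero_add]
  have hu2 : ι e2 * D (ι E) = D (ι E) := by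
    conv_lhs => rw [hu]
    rw [← mul_assoc, ← mul_assoc, ← map_mul, h2, ← hu]
  have hu1 : D (ι E) * ι e1 = D (ι E) := by
    conv_lhs => rw [hu]
    rw [mul_assoc, ← map_mul, h1, ← hu]
  have hv : D (ι Es) = ι e1 * D (ι Es) * ι e2 := by
    conv_lhs => rw [← hEs]
    rw [hLeib (e1 * Es) e2, hLeib e1 Es, hDe2, hDe1, mul_zero, zero_mul, add_zero, zero_add]
  have hv2 : D (ι Es) * ι e2 = D (ι Es) := by
    conv_lhs => rw [hv]
    rw [mul_assoc, ← map_mul, h2, ← hv]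
  have hw : D (ι b1) = ι e1 * D (ι b1) * ι e1 := by
    conv_lhs => rw [← hb1]
    rw [hLeib (e1 * b1) e1, hLeib e1 b1, hDe1, mul_zero, zero_mul, add_zero, zero_add]
  have hEu : ι E * D (ι E) = 0 := by
    conv_lhs => rw [hu]
    rw [← mul_assoc, ← mul_assoc, ← map_mul, hEe2, map_zero, zero_mul, zero_mul]
  have huE : D (ι E) * ι E = 0 := by
    conv_lhs => rw [hu]
    rw [mul_assoc, ← map_mul, he1E, map_zero, mul_zero]
  have hDEEs : D (ι (E * Es)) = ι E * D (ι Es) + D (ι E) * ι Es := hLeib E Es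
  have hDsw : D (ι (e1 + Es * E)) = ι Es * D (ι E) + D (ι Es) * ι E := by
    simp only [map_add, hDe1, zero_add]
    exact hLeib Es E
  have hDP1 : D (ι (b1 + (e2 + E * Es))) = D (ι b1) + (ι E * D (ι Es) + D (ι E) * ι Es) := by
    simp only [map_add]
    rw [hDe2, hDEEs, zero_add]
  have hF1 : ι (e1 + Es * E) * D (ι b1) = -((ι Es * D (ι E) + D (ι Es) * ι E) * ι b1) := by
    have h := hLeib (e1 + Es * E) b1
    rw [hb1l, hDe1, hDsw] at h
    exact eq_neg_of_add_eq_zero_left h.symm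
  have hF2 : D (ι b1) * ι (e1 + Es * E) = -(ι b1 * (ι Es * D (ι E) + D (ι Es) * ι E)) := by
    have h := hLeib b1 (e1 + Es * E)
    rw [hb1r, hDe1, hDsw] at h
    exact eq_neg_of_add_eq_zero_right h.symm
  have hB2w : ι b2 * D (ι b1) = 0 := by
    conv_lhs => rw [hw]
    rw [← mul_assoc, ← mul_assoc, ← map_mul, hb2e1, map_zero, zero_mul, zero_mul]
  have hwB2 : D (ι b1) * ι b2 = 0 := by
    conv_lhs => rw [hw]
    rw [mul_assoc, ← map_mul, he1b2, map_zero, mul_zero]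
  have hP2w : ι ((e1 + Es * E) + b2) * D (ι b1) =
      -((ι Es * D (ι E) + D (ι Es) * ι E) * ι b1) := by
    rw [map_add, add_mul, hF1, hB2w, add_zero]
  have hwP2 : D (ι b1) * ι ((e1 + Es * E) + b2) =
      -(ι b1 * (ι Es * D (ι E) + D (ι Es) * ι E)) := by
    rw [map_add, mul_add, hF2, hwB2, add_zero]
  have hP2E : ι ((e1 + Es * E) + b2) * ι E = ι b2 * ι E := by
    rw [← map_mul, ← map_mul, hp2E]
  have hvP2 : D (ι Es) * ι ((e1 + Es * E) + b2) = D (ι Es) * ι b2 := by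
    have h : ι e2 * ι ((e1 + Es * E) + b2) = ι b2 := by rw [← map_mul, he2p2]
    calc D (ι Es) * ι ((e1 + Es * E) + b2)
        = D (ι Es) * ι e2 * ι ((e1 + Es * E) + b2) := by rw [hv2]
      _ = D (ι Es) * (ι e2 * ι ((e1 + Es * E) + b2)) := by rw [mul_assoc]
      _ = D (ι Es) * ι b2 := by rw [h]
  have hP2u : ι ((e1 + Es * E) + b2) * D (ι E) = ι b2 * D (ι E) := by
    calc ι ((e1 + Es * E) + b2) * D (ι E)
        = ι ((e1 + Es * E) + b2) * (ι e2 * D (ι E)) := by rw [hu2]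
      _ = ι ((e1 + Es * E) + b2) * ι e2 * D (ι E) := by rw [mul_assoc]
      _ = ι b2 * D (ι E) := by rw [← map_mul, hp2e2]
  have hEsP2 : ι Es * ι ((e1 + Es * E) + b2) = ι Es * ι b2 := by
    rw [← map_mul, ← map_mul, hEsp2]
  -- monomial facts
  have m1 : ι E * ι b1 * ι Es = ι e2 - ι b2 := by
    rw [← map_mul, ← map_mul, hEb1Es, map_sub]
  have m1' : ι E * ι b1 * ι Es * D (ι E) = D (ι E) - ι b2 * D (ι E) := by
    rw [m1, sub_mul, hu2]
  have m2 : ι E * ι b1 = ι b2 * ι E := by rw [← map_mul, ← map_mul, hEb1]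
  have m3 : ι E * ι b2 = 0 := by rw [← map_mul, hEb2, map_zero]
  have m4 : ι E * ι E = 0 := by rw [← map_mul, hEE, map_zero]
  have m5 : ι b1 * ι E = 0 := by rw [← map_mul, hb1E, map_zero]
  have m6 : ι Es * ι b2 * ι E = ι e1 - ι b1 := by
    rw [← map_mul, ← map_mul, hEsb2E, map_sub]
  have m6' : D (ι E) * (ι Es * ι b2 * ι E) = D (ι E) - D (ι E) * ι b1 := by
    rw [m6, mul_sub, hu1]
  -- swap identities
  have hswap2 : ι ((e1 + Es * E) + b2) * D (ι E) * ι ((e1 + Es * E) + b2) =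
      ι b2 * D (ι E) * ι (e1 + Es * E) := by
    nth_rewrite 1 [hu]
    calc ι ((e1 + Es * E) + b2) * (ι e2 * D (ι E) * ι e1) * ι ((e1 + Es * E) + b2)
        = (ι ((e1 + Es * E) + b2) * ι e2) * D (ι E) * (ι e1 * ι ((e1 + Es * E) + b2)) := by
          noncomm_ring
      _ = ι b2 * D (ι E) * ι (e1 + Es * E) := by rw [← map_mul, ← map_mul, hp2e2, he1p2]
  have hswap1 : ι (b1 + (e2 + E * Es)) * D (ι E) * ι (b1 + (e2 + E * Es)) =
      ι (e2 + E * Es) * D (ι E) * ι b1 := by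
    nth_rewrite 1 [hu]
    calc ι (b1 + (e2 + E * Es)) * (ι e2 * D (ι E) * ι e1) * ι (b1 + (e2 + E * Es))
        = (ι (b1 + (e2 + E * Es)) * ι e2) * D (ι E) * (ι e1 * ι (b1 + (e2 + E * Es))) := by
          noncomm_ring
      _ = ι (e2 + E * Es) * D (ι E) * ι b1 := by rw [← map_mul, ← map_mul, hp1e2, he1p1]
  -- expansions of the right-hand side atoms
  have hexp2 : ι b2 * D (ι E) * ι (e1 + Es * E) =
      ι b2 * D (ι E) + ι b2 * D (ι E) * (ι Es * ι E) := by
    rw [map_add, map_mul, mul_add, mul_assoc (ι b2) (D (ι E)) (ι e1), hu1]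
  have hexp1 : ι (e2 + E * Es) * D (ι E) * ι b1 =
      D (ι E) * ι b1 + ι E * ι Es * D (ι E) * ι b1 := by
    rw [map_add, map_mul, add_mul, add_mul, hu2]
  -- ### key commutator computation
  have hKey : ι E * (ι ((e1 + Es * E) + b2) * D (ι (b1 + (e2 + E * Es))) -
        D (ι (b1 + (e2 + E * Es))) * ι ((e1 + Es * E) + b2)) -
      (ι ((e1 + Es * E) + b2) * D (ι (b1 + (e2 + E * Es))) -
        D (ι (b1 + (e2 + E * Es))) * ι ((e1 + Es * E) + b2)) * ι E =
      D (ι E) + D (ι E) - ι b2 * D (ι E) - ι b2 * D (ι E) * (ι Es * ι E) -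
        D (ι E) * ι b1 - ι E * ι Es * D (ι E) * ι b1 := by
    have hXv : ι ((e1 + Es * E) + b2) * D (ι (b1 + (e2 + E * Es))) -
        D (ι (b1 + (e2 + E * Es))) * ι ((e1 + Es * E) + b2) =
        (ι b1 * (ι Es * D (ι E) + D (ι Es) * ι E) -
          (ι Es * D (ι E) + D (ι Es) * ι E) * ι b1) +
        (ι b2 * ι E * D (ι Es) - ι E * (D (ι Es) * ι b2)) +
        (ι b2 * D (ι E) * ι Es - D (ι E) * (ι Es * ι b2)) := by
      rw [hDP1]
      calc ι ((e1 + Es * E) + b2) * (D (ι b1) + (ι E * D (ι Es) + D (ι E) * ι Es)) -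
            (D (ι b1) + (ι E * D (ι Es) + D (ι E) * ι Es)) * ι ((e1 + Es * E) + b2)
          = (ι ((e1 + Es * E) + b2) * D (ι b1) - D (ι b1) * ι ((e1 + Es * E) + b2)) +
            ((ι ((e1 + Es * E) + b2) * ι E) * D (ι Es) -
              ι E * (D (ι Es) * ι ((e1 + Es * E) + b2))) +
            ((ι ((e1 + Es * E) + b2) * D (ι E)) * ι Es -
              D (ι E) * (ι Es * ι ((e1 + Es * E) + b2))) := by noncomm_ring
        _ = _ := by rw [hP2w, hwP2, hP2E, hvP2, hP2u, hEsP2]; noncomm_ring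
    rw [hXv]
    calc ι E * ((ι b1 * (ι Es * D (ι E) + D (ι Es) * ι E) -
            (ι Es * D (ι E) + D (ι Es) * ι E) * ι b1) +
          (ι b2 * ι E * D (ι Es) - ι E * (D (ι Es) * ι b2)) +
          (ι b2 * D (ι E) * ι Es - D (ι E) * (ι Es * ι b2))) -
        ((ι b1 * (ι Es * D (ι E) + D (ι Es) * ι E) -
            (ι Es * D (ι E) + D (ι Es) * ι E) * ι b1) +
          (ι b2 * ι E * D (ι Es) - ι E * (D (ι Es) * ι b2)) +
          (ι b2 * D (ι E) * ι Es - D (ι E) * (ι Es * ι b2))) * ι E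
        = ι E * ι b1 * ι Es * D (ι E)
          + (ι E * ι b1) * (D (ι Es) * ι E)
          - (ι E * ι Es) * (D (ι E) * ι b1)
          - (ι E * D (ι Es)) * (ι E * ι b1)
          + (ι E * ι b2) * (ι E * D (ι Es))
          + (ι E * ι b2) * (D (ι E) * ι Es)
          - (ι E * ι E) * (D (ι Es) * ι b2)
          - (ι E * D (ι E)) * (ι Es * ι b2)
          - (ι b1 * ι Es) * (D (ι E) * ι E)
          - (ι b1 * D (ι Es)) * (ι E * ι E)
          + (ι Es * D (ι E)) * (ι b1 * ι E)
          + (D (ι Es) * ι E) * (ι b1 * ι E)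
          - (ι b2 * ι E) * (D (ι Es) * ι E)
          + (ι E * D (ι Es)) * (ι b2 * ι E)
          - (ι b2 * D (ι E)) * (ι Es * ι E)
          + D (ι E) * (ι Es * ι b2 * ι E) := by noncomm_ring
      _ = _ := by
          rw [m1', m2, m3, m4, m5, hEu, huE, m6']
          noncomm_ring
  constructor
  · -- part 1
    have hd0E : (innerTwist 1 (1 + Es * E) δes + innerTwist (1 + E * Es) 1 δes) E = 0 := by
      simp [innerTwist, hδesE]
    have hd0Es : (innerTwist 1 (1 + Es * E) δes + innerTwist (1 + E * Es) 1 δes) Es =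
        (e1 + Es * E) ⊗ₜ[k] e2 + e1 ⊗ₜ[k] (e2 + E * Es) := by
      simp only [innerTwist, LinearMap.add_apply, LinearMap.coe_comp, Function.comp_apply,
        hδesEs, TensorProduct.map_tmul, LinearMap.mulRight_apply, LinearMap.mulLeft_apply,
        one_mul, mul_one, hdA1, hdA2]
    have hsw : ∀ (w : Ω) (x y : A), sweedler ι w (x ⊗ₜ[k] y) = ι y * w * ι x := by
      intro w x y
      simp [sweedler]
    have hsw0 : ∀ (w : Ω), sweedler ι w (0 : A ⊗[k] A) = 0 := fun w => map_zero _
    have hswadd : ∀ (w : Ω) (t s : A ⊗[k] A),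
        sweedler ι w (t + s) = sweedler ι w t + sweedler ι w s := fun w t s => map_add _ _ _
    have S1 : ι e2 * (D (ι E) * ι (b1 + (e2 + E * Es))) * ι (e1 + Es * E) = D (ι E) := by
      calc ι e2 * (D (ι E) * ι (b1 + (e2 + E * Es))) * ι (e1 + Es * E)
          = (ι e2 * D (ι E)) * (ι (b1 + (e2 + E * Es)) * ι (e1 + Es * E)) := by noncomm_ring
        _ = D (ι E) * ι e1 := by rw [hu2, ← map_mul, hp1sw]
        _ = D (ι E) := hu1
    have S2 : ι (e2 + E * Es) * (D (ι E) * ι (b1 + (e2 + E * Es))) * ι e1 =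
        ι (e2 + E * Es) * D (ι E) * ι b1 := by
      calc ι (e2 + E * Es) * (D (ι E) * ι (b1 + (e2 + E * Es))) * ι e1
          = ι (e2 + E * Es) * D (ι E) * (ι (b1 + (e2 + E * Es)) * ι e1) := by noncomm_ring
        _ = ι (e2 + E * Es) * D (ι E) * ι b1 := by rw [← map_mul, hp1e1]
    have S3 : ι e2 * (ι ((e1 + Es * E) + b2) * D (ι E)) * ι (e1 + Es * E) =
        ι b2 * D (ι E) * ι (e1 + Es * E) := by
      calc ι e2 * (ι ((e1 + Es * E) + b2) * D (ι E)) * ι (e1 + Es * E)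
          = (ι e2 * ι ((e1 + Es * E) + b2)) * D (ι E) * ι (e1 + Es * E) := by noncomm_ring
        _ = ι b2 * D (ι E) * ι (e1 + Es * E) := by rw [← map_mul, he2p2]
    have S4 : ι (e2 + E * Es) * (ι ((e1 + Es * E) + b2) * D (ι E)) * ι e1 = D (ι E) := by
      calc ι (e2 + E * Es) * (ι ((e1 + Es * E) + b2) * D (ι E)) * ι e1
          = (ι (e2 + E * Es) * ι ((e1 + Es * E) + b2)) * (D (ι E) * ι e1) := by noncomm_ring
        _ = ι e2 * D (ι E) := by rw [← map_mul, hsw24, hu1]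
        _ = D (ι E) := hu2
    rw [hctrSmul, map_smul, map_sub, hctr, hctr, hd0E, hd0Es]
    simp only [hsw0, hswadd, hsw]
    rw [S1, S2, S3, S4, hswap2, hswap1, smul_smul, smul_smul]
    have hc : (4 : k) * 2⁻¹ * 2⁻¹ = 1 := by norm_num
    rw [hc, one_smul]
    rw [show (2 : k) • D (ι E) = D (ι E) + D (ι E) from two_smul k _]
    abel
  · -- part 2
    rw [hswap2, hswap1, hKey, hexp2, hexp1]
    rw [show (4 : k) = (2 : k) + (2 : k) by norm_num, add_smul,
      show (2 : k) • D (ι E) = D (ι E) + D (ι E) from two_smul k _]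
    abel
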